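/- If G is a spider (thin or thick) with nonempty head R, then i(G) < i_R(G). -/
import Mathlib


/-- `f` is an Independent Roman Dominating Function of `G`: values in {0,1,2},
every 0-labeled vertex has a 2-labeled neighbor, and no two adjacent vertices
are both positively labeled. -/
def IsIRDF {V : Type*} (G : SimpleGraph V) (f : V → ℕ) : Prop :=
  (∀ v, f v ≤ 2) ∧
  (∀ v, f v = 0 → ∃ u, G.Adj v u ∧ f u = 2) ∧
  (∀ u v, G.Adj u v → f u = 0 ∨ f v = 0)

/-- The weight of a labeling. -/
def irdfWeight {V : Type*} [Fintype V] (f : V → ℕ) : ℕ := ∑ v, f v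

/-- The independent Roman domination number. -/
noncomputable def iR {V : Type*} [Fintype V] (G : SimpleGraph V) : ℕ :=
  sInf {w | ∃ f : V → ℕ, IsIRDF G f ∧ irdfWeight f = w}

/-- `s` is an independent dominating set of `G`. -/
def IsIndepDom {V : Type*} (G : SimpleGraph V) (s : Finset V) : Prop :=
  (∀ u ∈ s, ∀ v ∈ s, ¬ G.Adj u v) ∧ (∀ v, v ∉ s → ∃ u ∈ s, G.Adj u v)

/-- The independent domination number. -/
noncomputable def indepDomNum {V : Type*} [Fintype V] (G : SimpleGraph V) : ℕ :=
  sInf {n | ∃ s : Finset V, IsIndepDom G s ∧ s.card = n}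

section Spider

variable {V : Type*} [Fintype V] [DecidableEq V] (G : SimpleGraph V)
  {l : ℕ} (c s : Fin l → V) (R : Finset V)

/-- The spider partition data: `c` enumerates the clique `C`, `s` the independent
set `S`, `R` is the head (the remaining vertices), every vertex of `R` is adjacent
to every vertex of `C` and to no vertex of `S`. -/
def IsSpiderPartition : Prop :=
  2 ≤ l ∧ Function.Injective c ∧ Function.Injective s ∧
  (∀ i j, c i ≠ s j) ∧
  (∀ v, v ∈ R ↔ ∀ i, v ≠ c i ∧ v ≠ s i) ∧
  (∀ i j, i ≠ j → G.Adj (c i) (c j)) ∧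
  (∀ i j, ¬ G.Adj (s i) (s j)) ∧
  (∀ v ∈ R, ∀ i, G.Adj v (c i)) ∧
  (∀ v ∈ R, ∀ i, ¬ G.Adj v (s i))

/-- A thin spider: `N(s i) = {c i}`. -/
def IsThinSpider : Prop :=
  IsSpiderPartition G c s R ∧ ∀ i v, G.Adj (s i) v ↔ v = c i

/-- A thick spider: `N(s i) = C \ {c i}`. -/
def IsThickSpider : Prop :=
  IsSpiderPartition G c s R ∧ ∀ i v, G.Adj (s i) v ↔ ∃ j, j ≠ i ∧ v = c j

end Spider

lemma key_lemma {V : Type*} [Fintype V] [DecidableEq V] (G : SimpleGraph V)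
    (a b : V) (hab : G.Adj a b) (f : V → ℕ) (hf : IsIRDF G f) :
    indepDomNum G < irdfWeight f := by
  classical
  set P : Finset V := Finset.univ.filter (fun v => f v ≠ 0) with hP
  have hindep : ∀ u ∈ P, ∀ v ∈ P, ¬ G.Adj u v := by
    intro u hu v hv hadj
    rcases hf.2.2 u v hadj with h | h
    · exact (Finset.mem_filter.1 hu).2 h
    · exact (Finset.mem_filter.1 hv).2 h
  have hdom : ∀ v, v ∉ P → ∃ u ∈ P, G.Adj u v := by
    intro v hv
    have hv0 : f v = 0 := by
      by_contra h
      exact hv (Finset.mem_filter.2 ⟨Finset.mem_univ v, h⟩)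
    obtain ⟨u, hadj, hu2⟩ := hf.2.1 v hv0
    exact ⟨u, Finset.mem_filter.2 ⟨Finset.mem_univ u, by omega⟩, hadj.symm⟩
  have h1 : indepDomNum G ≤ P.card :=
    Nat.sInf_le ⟨P, ⟨hindep, hdom⟩, rfl⟩
  -- some vertex has value 2
  have h2 : ∃ u ∈ P, f u = 2 := by
    have : f a = 0 ∨ f b = 0 := hf.2.2 a b hab
    rcases this with h | h
    · obtain ⟨u, hadj, hu2⟩ := hf.2.1 a h
      exact ⟨u, Finset.mem_filter.2 ⟨Finset.mem_univ u, by omega⟩, hu2⟩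
    · obtain ⟨u, hadj, hu2⟩ := hf.2.1 b h
      exact ⟨u, Finset.mem_filter.2 ⟨Finset.mem_univ u, by omega⟩, hu2⟩
  obtain ⟨u, huP, hu2⟩ := h2
  have h3 : P.card < ∑ v ∈ P, f v := by
    rw [Finset.card_eq_sum_ones]
    apply Finset.sum_lt_sum
    · intro i hi
      have := (Finset.mem_filter.1 hi).2
      omega
    · exact ⟨u, huP, by omega⟩
  have h4 : ∑ v ∈ P, f v ≤ irdfWeight f :=
    Finset.sum_le_sum_of_subset (Finset.subset_univ P)
  omega

lemma final_aux {V : Type*} [Fintype V] [DecidableEq V] (G : SimpleGraph V)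
    (a b : V) (hab : G.Adj a b) (f0 : V → ℕ) (hf0 : IsIRDF G f0) :
    indepDomNum G < iR G := by
  have hTne : {w | ∃ f : V → ℕ, IsIRDF G f ∧ irdfWeight f = w}.Nonempty :=
    ⟨irdfWeight f0, f0, hf0, rfl⟩
  obtain ⟨g, hg, hw⟩ := Nat.sInf_mem hTne
  rw [iR, ← hw]
  exact key_lemma G a b hab g hg

/-- a spider (thin or thick) with nonempty head satisfies
`i(G) < i_R(G)`. -/
theorem indepDomNum_lt_iR_spider {V : Type*} [Fintype V] [DecidableEq V]
    (G : SimpleGraph V) {l : ℕ} (c s : Fin l → V) (R : Finset V)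
    (hspider : IsThinSpider G c s R ∨ IsThickSpider G c s R) (hR : R.Nonempty) :
    indepDomNum G < iR G := by
  classical
  have hsp : IsSpiderPartition G c s R := by
    rcases hspider with h | h
    · exact h.1
    · exact h.1
  obtain ⟨hl, hcinj, hsinj, hcs, hRmem, hCC, hSS, hRC, hRS⟩ := hsp
  set i0 : Fin l := ⟨0, by omega⟩ with hi0
  set i1 : Fin l := ⟨1, by omega⟩ with hi1
  have hne01 : i0 ≠ i1 := by simp [hi0, hi1, Fin.ext_iff]
  have hedge : G.Adj (c i0) (c i1) := hCC i0 i1 hne01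
  -- every vertex is a c, an s, or in R
  have hcases : ∀ v : V, v ∈ R ∨ (∃ i, v = c i) ∨ (∃ i, v = s i) := by
    intro v
    by_cases hv : v ∈ R
    · exact Or.inl hv
    · have := (hRmem v).not.1 hv
      push_neg at this
      obtain ⟨i, hi⟩ := this
      by_cases h : v = c i
      · exact Or.inr (Or.inl ⟨i, h⟩)
      · exact Or.inr (Or.inr ⟨i, hi h⟩)
  rcases hspider with ⟨_, hN⟩ | ⟨_, hN⟩
  · -- thin spider
    set f0 : V → ℕ := fun v =>
      if v = c i0 ∨ ∃ i, i ≠ i0 ∧ v = s i then 2 else 0 with hf0def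
    have hval : ∀ v, f0 v = 2 ∨ f0 v = 0 := by
      intro v; by_cases h : v = c i0 ∨ ∃ i, i ≠ i0 ∧ v = s i <;>
        simp [hf0def, h]
    have hpos : ∀ v, f0 v ≠ 0 → (v = c i0 ∨ ∃ i, i ≠ i0 ∧ v = s i) := by
      intro v hv
      by_contra h
      exact hv (by simp [hf0def, h])
    have hf0c : f0 (c i0) = 2 := by simp [hf0def]
    refine final_aux G (c i0) (c i1) hedge f0 ⟨?_, ?_, ?_⟩
    · intro v; rcases hval v with h | h <;> omega
    · intro v hv
      refine ⟨c i0, ?_, hf0c⟩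
      have hnot : ¬ (v = c i0 ∨ ∃ i, i ≠ i0 ∧ v = s i) := by
        intro h; simp [hf0def, h] at hv
      push_neg at hnot
      obtain ⟨hvc0, hvs⟩ := hnot
      rcases hcases v with hvR | ⟨i, rfl⟩ | ⟨i, rfl⟩
      · exact hRC v hvR i0
      · have : i ≠ i0 := fun h => hvc0 (by rw [h])
        exact hCC i i0 this
      · have hii0 : i = i0 := by
          by_contra h
          exact (hvs i h) rfl
        exact (hN i (c i0)).2 (by rw [hii0])
    · intro u v hadj
      by_contra h
      push_neg at h
      obtain ⟨hu, hv⟩ := h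
      rcases hpos u hu with rfl | ⟨i, hi, rfl⟩ <;>
        rcases hpos v hv with h2 | ⟨j, hj, rfl⟩
      · rw [h2] at hadj; exact G.irrefl hadj
      · have := (hN j (c i0)).1 hadj.symm
        exact hj (hcinj this).symm
      · rw [h2] at hadj
        have := (hN i (c i0)).1 hadj
        exact hi (hcinj this).symm
      · exact hSS i j hadj
  · -- thick spider
    set f0 : V → ℕ := fun v => if v = c i0 ∨ v = s i0 then 2 else 0 with hf0def
    have hval : ∀ v, f0 v = 2 ∨ f0 v = 0 := by
      intro v; by_cases h : v = c i0 ∨ v = s i0 <;> simp [hf0def, h]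
    have hpos : ∀ v, f0 v ≠ 0 → (v = c i0 ∨ v = s i0) := by
      intro v hv
      by_contra h
      exact hv (by simp [hf0def, h])
    have hf0c : f0 (c i0) = 2 := by simp [hf0def]
    refine final_aux G (c i0) (c i1) hedge f0 ⟨?_, ?_, ?_⟩
    · intro v; rcases hval v with h | h <;> omega
    · intro v hv
      refine ⟨c i0, ?_, hf0c⟩
      have hnot : ¬ (v = c i0 ∨ v = s i0) := by
        intro h; simp [hf0def, h] at hv
      push_neg at hnot
      obtain ⟨hvc0, hvs0⟩ := hnot
      rcases hcases v with hvR | ⟨i, rfl⟩ | ⟨i, rfl⟩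
      · exact hRC v hvR i0
      · have : i ≠ i0 := fun h => hvc0 (by rw [h])
        exact hCC i i0 this
      · have hii0 : i ≠ i0 := fun h => hvs0 (by rw [h])
        exact (hN i (c i0)).2 ⟨i0, fun h => hii0 h.symm, rfl⟩
    · intro u v hadj
      by_contra h
      push_neg at h
      obtain ⟨hu, hv⟩ := h
      rcases hpos u hu with rfl | rfl <;> rcases hpos v hv with h2 | h2 <;>
        rw [h2] at hadj
      · exact G.irrefl hadj
      · obtain ⟨j, hj, hcj⟩ := (hN i0 (c i0)).1 hadj.symm
        exact hj (hcinj hcj).symm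
      · obtain ⟨j, hj, hcj⟩ := (hN i0 (c i0)).1 hadj
        exact hj (hcinj hcj).symm
      · exact hSS i0 i0 hadj
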